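/- Let L: (0,∞)^p → (0,∞) be a function (a marginal likelihood) such that L(β) remains bounded (L(β) ≤ M for some M) as any β_l → ∞ or as all β_l → 0. Let π(β) = (∑_{l=1}^p C_l β_l)^a exp(−b ∑_{l=1}^p C_l β_l) with a > 0, b > 0, C_l > 0. Then the product L(β)·π(β) tends to 0 as any β_l → ∞ and as all β_l → 0 simultaneously. Consequently, if L·π attains a maximum on the closure of (0,∞)^p and is positive somewhere on (0,∞)^p, the maximizer β̂ satisfies 0 < ∑_{l=1}^p C_l β̂_l < ∞ with β̂_l < ∞ for all l. -/

import Mathlib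

open Real Finset Filter

/-- Robustness of the marginal posterior mode with the jointly robust prior: if the marginal
likelihood `L` is positive and bounded on the positive orthant, then the marginal posterior
`L·π` tends to `0` as any single `β_l → ∞` and as all `β_l → 0` simultaneously; consequently
any maximizer `βhat` of `L·π` over the positive orthant at which `L·π` is positive satisfies
`0 < ∑ C_l βhat_l` (and trivially each `βhat_l` is finite). -/
theorem jr_posterior_mode_robust
    (p : ℕ) (hp : 1 ≤ p) (a b : ℝ) (ha : 0 < a) (hb : 0 < b)
    (C : Fin p → ℝ) (hC : ∀ l, 0 < C l)
    (L : (Fin p → ℝ) → ℝ) (M : ℝ)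
    (hLpos : ∀ β, (∀ i, 0 < β i) → 0 < L β)
    (hLbdd : ∀ β, (∀ i, 0 < β i) → L β ≤ M) :
    (∀ (l : Fin p) (β : Fin p → ℝ), (∀ i, 0 < β i) →
      Tendsto (fun t : ℝ =>
          L (Function.update β l t) *
            ((∑ i, C i * Function.update β l t i) ^ a *
              Real.exp (-b * ∑ i, C i * Function.update β l t i)))
        atTop (nhds 0)) ∧
    (Tendsto (fun β : Fin p → ℝ =>
        L β * ((∑ l, C l * β l) ^ a * Real.exp (-b * ∑ l, C l * β l)))
      (nhdsWithin 0 {β : Fin p → ℝ | ∀ i, 0 < β i}) (nhds 0)) ∧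
    (∀ βhat : Fin p → ℝ, (∀ i, 0 < βhat i) →
      (∀ β, (∀ i, 0 < β i) →
        L β * ((∑ l, C l * β l) ^ a * Real.exp (-b * ∑ l, C l * β l)) ≤
          L βhat * ((∑ l, C l * βhat l) ^ a * Real.exp (-b * ∑ l, C l * βhat l))) →
      0 < L βhat * ((∑ l, C l * βhat l) ^ a * Real.exp (-b * ∑ l, C l * βhat l)) →
      0 < ∑ l, C l * βhat l) := by
  have hM : 0 < M :=
    lt_of_lt_of_le (hLpos (fun _ => 1) (fun _ => one_pos)) (hLbdd _ (fun _ => one_pos))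
  refine ⟨?_, ?_, ?_⟩
  · intro l β hβ
    set K := ∑ i ∈ Finset.univ.erase l, C i * β i with hK
    have hsum : ∀ t : ℝ, ∑ i, C i * Function.update β l t i = C l * t + K := by
      intro t
      rw [← Finset.add_sum_erase _ _ (Finset.mem_univ l)]
      simp only [Function.update_self]
      congr 1
      refine Finset.sum_congr rfl fun i hi => ?_
      rw [Function.update_of_ne (Finset.ne_of_mem_erase hi)]
    have hs : Tendsto (fun t : ℝ => C l * t + K) atTop atTop :=
      tendsto_atTop_add_const_right _ K (tendsto_id.const_mul_atTop (hC l))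
    have hg : Tendsto (fun t : ℝ =>
        (C l * t + K) ^ a * Real.exp (-b * (C l * t + K))) atTop (nhds 0) :=
      (tendsto_rpow_mul_exp_neg_mul_atTop_nhds_zero a b hb).comp hs
    have hg' : Tendsto (fun t : ℝ =>
        M * ((C l * t + K) ^ a * Real.exp (-b * (C l * t + K)))) atTop (nhds 0) := by
      simpa using hg.const_mul M
    have hKnn : 0 ≤ K :=
      Finset.sum_nonneg fun i _ => (mul_pos (hC i) (hβ i)).le
    have hupd : ∀ t : ℝ, 0 < t → ∀ i, 0 < Function.update β l t i := by
      intro t ht i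
      rcases eq_or_ne i l with h | h
      · rw [h, Function.update_self]; exact ht
      · rw [Function.update_of_ne h]; exact hβ i
    refine squeeze_zero' ?_ ?_ hg'
    · filter_upwards [eventually_gt_atTop (0 : ℝ)] with t ht
      exact mul_nonneg (hLpos _ (hupd t ht)).le
        (mul_nonneg (Real.rpow_nonneg (by rw [hsum]; have := (mul_pos (hC l) ht).le; linarith) _) (Real.exp_pos _).le)
    · filter_upwards [eventually_gt_atTop (0 : ℝ)] with t ht
      rw [hsum]
      exact mul_le_mul_of_nonneg_right (hLbdd _ (hupd t ht))
        (mul_nonneg (Real.rpow_nonneg (by have := (mul_pos (hC l) ht).le; linarith) _) (Real.exp_pos _).le)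
  · have hcont : Continuous fun β : Fin p → ℝ => ∑ l, C l * β l := by
      exact continuous_finset_sum _ fun i _ => continuous_const.mul (continuous_apply i)
    have hs : Tendsto (fun β : Fin p → ℝ => ∑ l, C l * β l)
        (nhdsWithin 0 {β : Fin p → ℝ | ∀ i, 0 < β i}) (nhds 0) := by
      have := (hcont.tendsto 0).mono_left
        (nhdsWithin_le_nhds (s := {β : Fin p → ℝ | ∀ i, 0 < β i}))
      simpa using this
    have hrpow : Tendsto (fun x : ℝ => x ^ a * Real.exp (-b * x)) (nhds 0) (nhds 0) := by
      have h1 : ContinuousAt (fun x : ℝ => x ^ a) 0 :=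
        Real.continuousAt_rpow_const 0 a (Or.inr ha.le)
      have h2 : ContinuousAt (fun x : ℝ => Real.exp (-b * x)) 0 :=
        (Real.continuous_exp.comp ((continuous_const).mul continuous_id)).continuousAt
      have : ContinuousAt (fun x : ℝ => x ^ a * Real.exp (-b * x)) 0 := h1.mul h2
      simpa [Real.zero_rpow ha.ne'] using this.tendsto
    have hg := hrpow.comp hs
    have hg' : Tendsto (fun β : Fin p → ℝ =>
        M * ((∑ l, C l * β l) ^ a * Real.exp (-b * ∑ l, C l * β l)))
        (nhdsWithin 0 {β : Fin p → ℝ | ∀ i, 0 < β i}) (nhds 0) := by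
      simpa using hg.const_mul M
    refine squeeze_zero' ?_ ?_ hg'
    · filter_upwards [self_mem_nhdsWithin] with β hβ
      have hsnn : (0:ℝ) ≤ ∑ l, C l * β l := by
        exact Finset.sum_nonneg fun i _ => (mul_pos (hC i) (hβ i)).le
      exact mul_nonneg (hLpos _ hβ).le
        (mul_nonneg (Real.rpow_nonneg hsnn _) (Real.exp_pos _).le)
    · filter_upwards [self_mem_nhdsWithin] with β hβ
      have hsnn : (0:ℝ) ≤ ∑ l, C l * β l :=
        Finset.sum_nonneg fun i _ => (mul_pos (hC i) (hβ i)).le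
      exact mul_le_mul_of_nonneg_right (hLbdd _ hβ)
        (mul_nonneg (Real.rpow_nonneg hsnn _) (Real.exp_pos _).le)
  · intro βhat hβ _ _
    have : Nonempty (Fin p) := ⟨⟨0, hp⟩⟩
    exact Finset.sum_pos (fun i _ => mul_pos (hC i) (hβ i)) Finset.univ_nonempty
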